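/- For q ≥ 4 and nonzero f, g ∈ L^q(X,μ), one has max{‖f‖_q, ‖g‖_q} · ‖ |f|^{q-2}/‖f‖_q^{q-2} − |g|^{q-2}/‖g‖_q^{q-2} ‖_{q/(q-2)} ≤ 4(q-2)‖f − g‖_q. -/

import Mathlib

open MeasureTheory
open scoped ENNReal NNReal


lemma rpow_sub_rpow_le {a b s : ℝ} (hb : 0 ≤ b) (hba : b ≤ a) (hs : 1 ≤ s) :
    a ^ s - b ^ s ≤ s * a ^ (s - 1) * (a - b) := by
  have ha : 0 ≤ a := hb.trans hba
  rcases ha.eq_or_lt with h | h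
  · have hb0 : b = 0 := le_antisymm (hba.trans h.ge) hb
    simp [← h, hb0, Real.zero_rpow (by linarith : s ≠ 0)]
  · -- a > 0
    have hber := one_add_mul_self_le_rpow_one_add (s := b / a - 1) (by
      have : 0 ≤ b / a := div_nonneg hb h.le
      linarith) hs
    rw [show (1 : ℝ) + (b / a - 1) = b / a by ring] at hber
    have hdiv : (b / a) ^ s = b ^ s / a ^ s := Real.div_rpow hb h.le s
    have has : (0:ℝ) < a ^ s := Real.rpow_pos_of_pos h s
    have hkey : a ^ s = a ^ (s - 1) * a := by
      rw [← Real.rpow_add_one h.ne' (s - 1)]; ring_nf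
    have h2 : a ^ s * (1 + s * (b / a - 1)) ≤ b ^ s := by
      calc a ^ s * (1 + s * (b / a - 1)) ≤ a ^ s * (b / a) ^ s :=
            mul_le_mul_of_nonneg_left hber has.le
        _ = b ^ s := by rw [hdiv]; field_simp
    have hexp : a ^ s * (1 + s * (b / a - 1)) = a ^ s + s * (a ^ (s-1) * b - a ^ s) := by
      field_simp
      rw [hkey]; ring
    nlinarith [Real.rpow_nonneg ha (s-1)]

lemma abs_rpow_sub_rpow_le {a b s : ℝ} (ha : 0 ≤ a) (hb : 0 ≤ b) (hs : 1 ≤ s) :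
    |a ^ s - b ^ s| ≤ s * (a ^ (s - 1) + b ^ (s - 1)) * |a - b| := by
  have hs0 : (0:ℝ) ≤ s := by linarith
  rcases le_total b a with h | h
  · rw [abs_of_nonneg (by linarith : (0:ℝ) ≤ a - b),
      abs_of_nonneg (sub_nonneg.2 (Real.rpow_le_rpow hb h hs0))]
    have := rpow_sub_rpow_le hb h hs
    nlinarith [mul_nonneg (mul_nonneg hs0 (Real.rpow_nonneg hb (s-1))) (by linarith : (0:ℝ) ≤ a - b)]
  · rw [abs_of_nonpos (by linarith : a - b ≤ 0),
      abs_of_nonpos (sub_nonpos.2 (Real.rpow_le_rpow ha h hs0))]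
    have := rpow_sub_rpow_le ha h hs
    nlinarith [mul_nonneg (mul_nonneg hs0 (Real.rpow_nonneg ha (s-1))) (by linarith : (0:ℝ) ≤ b - a)]

noncomputable def Lnorm {X : Type*} [MeasurableSpace X] (μ : Measure X) (p : ℝ) (f : X → ℝ) : ℝ :=
  (∫ x, |f x| ^ p ∂μ) ^ (1 / p)

lemma Lnorm_eq_toReal {X : Type*} [MeasurableSpace X] {μ : Measure X} {r : ℝ} (hr : 0 < r)
    {w : X → ℝ} (hw : MemLp w (ENNReal.ofReal r) μ) :
    Lnorm μ r w = (eLpNorm w (ENNReal.ofReal r) μ).toReal := by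
  rw [hw.eLpNorm_eq_integral_rpow_norm (by simp [hr]) ENNReal.ofReal_ne_top,
    ENNReal.toReal_ofReal (Real.rpow_nonneg (integral_nonneg fun x => by positivity) _)]
  simp only [Lnorm, ENNReal.toReal_ofReal hr.le, Real.norm_eq_abs, one_div]

lemma holder_step {X : Type*} [MeasurableSpace X] (μ : Measure X) {q s : ℝ}
    (hq0 : 0 < q) (hs1 : 1 < s) (hsq : s < q)
    {w d : X → ℝ} (hw : AEStronglyMeasurable w μ) (hd : AEStronglyMeasurable d μ) :
    eLpNorm (fun x => |w x| ^ (s - 1) * d x) (ENNReal.ofReal (q / s)) μ ≤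
      eLpNorm w (ENNReal.ofReal q) μ ^ (s - 1) * eLpNorm d (ENNReal.ofReal q) μ := by
  have hs0 : (0:ℝ) < s - 1 := by linarith
  have hpqr : 1 / ENNReal.ofReal (q / s)
      = 1 / ENNReal.ofReal (q / (s - 1)) + 1 / ENNReal.ofReal q := by
    rw [one_div, one_div, one_div, ← ENNReal.ofReal_inv_of_pos (div_pos hq0 (by linarith)),
      ← ENNReal.ofReal_inv_of_pos (div_pos hq0 hs0), ← ENNReal.ofReal_inv_of_pos hq0,
      ← ENNReal.ofReal_add (by positivity) (by positivity)]
    congr 1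
    rw [inv_div, inv_div, inv_eq_one_div, ← add_div]
    norm_num
  have hφ : AEStronglyMeasurable (fun x => |w x| ^ (s - 1)) μ :=
    (hw.norm.aemeasurable.pow_const (s - 1)).aestronglyMeasurable |>.congr (Filter.Eventually.of_forall fun x => by simp [Real.norm_eq_abs])
  haveI : ENNReal.HolderTriple (ENNReal.ofReal (q / (s - 1))) (ENNReal.ofReal q)
      (ENNReal.ofReal (q / s)) := ⟨by simpa only [one_div] using hpqr.symm⟩
  have hH := eLpNorm_smul_le_mul_eLpNorm (f := d) (φ := fun x => |w x| ^ (s - 1))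
    (p := ENNReal.ofReal (q / (s - 1))) (q := ENNReal.ofReal q) (r := ENNReal.ofReal (q / s)) hd hφ
  have hmul : (fun x => |w x| ^ (s - 1)) • d = fun x => |w x| ^ (s - 1) * d x := rfl
  rw [hmul] at hH
  refine hH.trans ?_
  gcongr
  have hrw : (fun x => |w x| ^ (s - 1)) = fun x => ‖w x‖ ^ (s - 1) := by
    funext x; rw [Real.norm_eq_abs]
  rw [hrw, eLpNorm_norm_rpow w hs0, ← ENNReal.ofReal_mul (by positivity),
    div_mul_cancel₀ q (by linarith : s - 1 ≠ 0)]

lemma arithA {s F G dr A : ℝ} (hs0 : 0 < s) (hFpos : 0 < F)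
    (hFs : 0 < F ^ s) (hdr0 : 0 ≤ dr) (hGsFs1 : G ^ (s-1) ≤ F ^ (s-1))
    (hkeyF : F ^ s = F ^ (s-1) * F)
    (hA_def : A = (F ^ s)⁻¹ * (s * (F ^ (s-1) * dr + G ^ (s-1) * dr))) :
    F * A ≤ 2 * s * dr := by
  have e : F * A = s * dr * ((F ^ (s-1) + G ^ (s-1)) * F) / F ^ s := by
    rw [hA_def]; field_simp
  rw [e, div_le_iff₀ hFs, hkeyF]
  nlinarith [mul_le_mul_of_nonneg_left hGsFs1
    (mul_nonneg (mul_nonneg hs0.le hdr0) hFpos.le)]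

lemma arithB {s F G dr B : ℝ} (hs0 : 0 < s) (hFpos : 0 < F)
    (hFs : 0 < F ^ s) (hGs : 0 < G ^ s) (hFs1 : 0 < F ^ (s-1))
    (hFGdr : F - G ≤ dr) (hkeyF : F ^ s = F ^ (s-1) * F)
    (hmvt : F ^ s - G ^ s ≤ s * F ^ (s-1) * (F - G))
    (hB_def : B = ((G ^ s)⁻¹ - (F ^ s)⁻¹) * G ^ s) : F * B ≤ s * dr := by
  have e : F * B = (F ^ s - G ^ s) * F / F ^ s := by
    rw [hB_def]; field_simp
  rw [e, div_le_iff₀ hFs, hkeyF]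
  have h1 : F ^ s - G ^ s ≤ s * F ^ (s-1) * dr := by
    refine hmvt.trans ?_
    have := mul_le_mul_of_nonneg_left hFGdr (mul_nonneg hs0.le hFs1.le)
    nlinarith
  nlinarith [mul_le_mul_of_nonneg_right h1 hFpos.le]

lemma key {X : Type*} [MeasurableSpace X] (μ : Measure X) (q : ℝ)
    (hq : 4 ≤ q) (f g : X → ℝ)
    (hf : MemLp f (ENNReal.ofReal q) μ) (hg : MemLp g (ENNReal.ofReal q) μ)
    (hfn : 0 < Lnorm μ q f) (hgn : 0 < Lnorm μ q g)
    (hFG : Lnorm μ q g ≤ Lnorm μ q f) :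
    Lnorm μ q f *
      Lnorm μ (q / (q - 2))
        (fun x => |f x| ^ (q - 2) / (Lnorm μ q f) ^ (q - 2)
                 - |g x| ^ (q - 2) / (Lnorm μ q g) ^ (q - 2)) ≤
      3 * (q - 2) * Lnorm μ q (fun x => f x - g x) := by
  have hq0 : (0:ℝ) < q := by linarith
  set s : ℝ := q - 2 with hs_def
  have hs2 : (2:ℝ) ≤ s := by rw [hs_def]; linarith
  have hs1 : (1:ℝ) < s := by linarith
  have hs0 : (0:ℝ) < s := by linarith
  have hsq : s < q := by rw [hs_def]; linarith
  have hps : (1:ℝ) ≤ q / s := (one_le_div hs0).2 hsq.le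
  have hp0 : (0:ℝ) < q / s := by positivity
  set Q : ℝ≥0∞ := ENNReal.ofReal q with hQ_def
  set P : ℝ≥0∞ := ENNReal.ofReal (q / s) with hP_def
  set F : ℝ := Lnorm μ q f with hF_def
  set G : ℝ := Lnorm μ q g with hG_def
  set dr : ℝ := Lnorm μ q (fun x => f x - g x) with hdr_def
  clear_value s F G dr
  have hdsub : MemLp (f - g) Q μ := hf.sub hg
  have hd_eq : (fun x => f x - g x) = f - g := rfl
  have hdr0 : 0 ≤ dr := by
    rw [hdr_def, hd_eq, Lnorm_eq_toReal hq0 hdsub]; exact ENNReal.toReal_nonneg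
  have hAf : ENNReal.ofReal F = eLpNorm f Q μ := by
    rw [hF_def, Lnorm_eq_toReal hq0 hf]; exact ENNReal.ofReal_toReal hf.2.ne
  have hBg : ENNReal.ofReal G = eLpNorm g Q μ := by
    rw [hG_def, Lnorm_eq_toReal hq0 hg]; exact ENNReal.ofReal_toReal hg.2.ne
  have hD : ENNReal.ofReal dr = eLpNorm (f - g) Q μ := by
    rw [hdr_def, hd_eq, Lnorm_eq_toReal hq0 hdsub]; exact ENNReal.ofReal_toReal hdsub.2.ne
  -- memLp of |f|^s and |g|^s in L^{q/s}
  have hmem : ∀ (w : X → ℝ), MemLp w Q μ → MemLp (fun x => |w x| ^ s) P μ := by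
    intro w hw
    have h1 := hw.norm_rpow_div (ENNReal.ofReal s)
    rw [← ENNReal.ofReal_div_of_pos hs0] at h1
    simpa [ENNReal.toReal_ofReal hs0.le, Real.norm_eq_abs] using h1
  have hu := hmem f hf
  have hv := hmem g hg
  -- positivity facts
  have hFpos : 0 < F := hfn
  have hGpos : 0 < G := hgn
  have hFs : 0 < F ^ s := Real.rpow_pos_of_pos hFpos s
  have hGs : 0 < G ^ s := Real.rpow_pos_of_pos hGpos s
  have hGsFs : G ^ s ≤ F ^ s := Real.rpow_le_rpow hGpos.le hFG hs0.le
  -- decomposition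
  have hh_eq : (fun x => |f x| ^ s / F ^ s - |g x| ^ s / G ^ s)
      = (F ^ s)⁻¹ • (fun x => |f x| ^ s - |g x| ^ s)
        + ((F ^ s)⁻¹ - (G ^ s)⁻¹) • (fun x => |g x| ^ s) := by
    funext x
    simp only [Pi.add_apply, Pi.smul_apply, smul_eq_mul]
    field_simp
    ring
  have hmemh : MemLp (fun x => |f x| ^ s / F ^ s - |g x| ^ s / G ^ s) P μ := by
    rw [hh_eq]; exact ((hu.sub hv).const_smul _).add (hv.const_smul _)
  -- triangle and smul norms
  have hP1 : (1:ℝ≥0∞) ≤ P := by rw [hP_def]; exact ENNReal.one_le_ofReal.2 hps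
  have hm1 : AEStronglyMeasurable ((F ^ s)⁻¹ • (fun x => |f x| ^ s - |g x| ^ s)) μ :=
    ((hu.sub hv).const_smul _).1
  have hm2 : AEStronglyMeasurable (((F ^ s)⁻¹ - (G ^ s)⁻¹) • (fun x => |g x| ^ s)) μ :=
    (hv.const_smul _).1
  have htri : eLpNorm (fun x => |f x| ^ s / F ^ s - |g x| ^ s / G ^ s) P μ
      ≤ eLpNorm ((F ^ s)⁻¹ • (fun x => |f x| ^ s - |g x| ^ s)) P μ
        + eLpNorm (((F ^ s)⁻¹ - (G ^ s)⁻¹) • (fun x => |g x| ^ s)) P μ := by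
    rw [hh_eq]; exact eLpNorm_add_le hm1 hm2 hP1
  have hE1 : eLpNorm ((F ^ s)⁻¹ • (fun x => |f x| ^ s - |g x| ^ s)) P μ
      = ENNReal.ofReal (F ^ s)⁻¹ * eLpNorm (fun x => |f x| ^ s - |g x| ^ s) P μ := by
    rw [eLpNorm_const_smul]
    congr 1
    rw [← ofReal_norm, Real.norm_eq_abs, abs_of_nonneg (inv_nonneg.2 hFs.le)]
  have hE2 : eLpNorm (((F ^ s)⁻¹ - (G ^ s)⁻¹) • (fun x => |g x| ^ s)) P μ
      = ENNReal.ofReal ((G ^ s)⁻¹ - (F ^ s)⁻¹) * eLpNorm (fun x => |g x| ^ s) P μ := by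
    rw [eLpNorm_const_smul]
    congr 1
    rw [← ofReal_norm, Real.norm_eq_abs,
      abs_of_nonpos (sub_nonpos.2 (inv_anti₀ hGs hGsFs)), neg_sub]
  -- norm of |g|^s
  have hvnorm : eLpNorm (fun x => |g x| ^ s) P μ = ENNReal.ofReal (G ^ s) := by
    have he : (fun x => |g x| ^ s) = fun x => ‖g x‖ ^ s := by
      funext x; rw [Real.norm_eq_abs]
    rw [he, eLpNorm_norm_rpow g hs0, hP_def, ← ENNReal.ofReal_mul (by positivity),
      div_mul_cancel₀ q hs0.ne', ← hQ_def, ← hBg, ENNReal.ofReal_rpow_of_pos hGpos]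
  -- bound |f|^s - |g|^s
  have hw1m : AEStronglyMeasurable (fun x => |f x| ^ (s - 1) * (f x - g x)) μ := by
    refine ((hf.1.norm.aemeasurable.pow_const (s - 1)).mul
      hdsub.1.aemeasurable).aestronglyMeasurable.congr
      (Filter.Eventually.of_forall fun x => by simp [Real.norm_eq_abs])
  have hw2m : AEStronglyMeasurable (fun x => |g x| ^ (s - 1) * (f x - g x)) μ := by
    refine ((hg.1.norm.aemeasurable.pow_const (s - 1)).mul
      hdsub.1.aemeasurable).aestronglyMeasurable.congr
      (Filter.Eventually.of_forall fun x => by simp [Real.norm_eq_abs])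
  have huv : eLpNorm (fun x => |f x| ^ s - |g x| ^ s) P μ
      ≤ ENNReal.ofReal s * (ENNReal.ofReal (F ^ (s-1)) * ENNReal.ofReal dr
          + ENNReal.ofReal (G ^ (s-1)) * ENNReal.ofReal dr) := by
    have hpt : ∀ x, ‖|f x| ^ s - |g x| ^ s‖
        ≤ ‖s • (fun y => ‖(fun z => |f z| ^ (s - 1) * (f z - g z)) y‖
            + ‖(fun z => |g z| ^ (s - 1) * (f z - g z)) y‖) x‖ := by
      intro x
      simp only [Pi.smul_apply, smul_eq_mul, Real.norm_eq_abs]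
      have h1 := abs_rpow_sub_rpow_le (abs_nonneg (f x)) (abs_nonneg (g x)) hs1.le
      have h2 : |(|f x| - |g x|)| ≤ |f x - g x| := abs_abs_sub_abs_le_abs_sub _ _
      have h3 : (0:ℝ) ≤ |f x| ^ (s-1) := Real.rpow_nonneg (abs_nonneg _) _
      have h4 : (0:ℝ) ≤ |g x| ^ (s-1) := Real.rpow_nonneg (abs_nonneg _) _
      refine le_trans ?_ (le_abs_self _)
      rw [abs_mul, abs_mul, abs_of_nonneg h3, abs_of_nonneg h4]
      calc |(|f x| ^ s - |g x| ^ s)|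
          ≤ s * (|f x| ^ (s - 1) + |g x| ^ (s - 1)) * |(|f x| - |g x|)| := h1
        _ ≤ s * (|f x| ^ (s - 1) + |g x| ^ (s - 1)) * |f x - g x| :=
            mul_le_mul_of_nonneg_left h2 (mul_nonneg hs0.le (add_nonneg h3 h4))
        _ = s * (|f x| ^ (s - 1) * |f x - g x| + |g x| ^ (s - 1) * |f x - g x|) := by ring
    calc eLpNorm (fun x => |f x| ^ s - |g x| ^ s) P μ
        ≤ eLpNorm (s • (fun y => ‖(fun z => |f z| ^ (s - 1) * (f z - g z)) y‖
            + ‖(fun z => |g z| ^ (s - 1) * (f z - g z)) y‖)) P μ := eLpNorm_mono hpt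
      _ = ↑‖s‖₊ * eLpNorm ((fun y => ‖(fun z => |f z| ^ (s - 1) * (f z - g z)) y‖)
            + (fun y => ‖(fun z => |g z| ^ (s - 1) * (f z - g z)) y‖)) P μ := by
          rw [eLpNorm_const_smul]; rfl
      _ ≤ ENNReal.ofReal s * (eLpNorm (fun x => |f x| ^ (s - 1) * (f x - g x)) P μ
            + eLpNorm (fun x => |g x| ^ (s - 1) * (f x - g x)) P μ) := by
          rw [← enorm_eq_nnnorm, ← ofReal_norm, Real.norm_eq_abs, abs_of_nonneg hs0.le]
          gcongr
          refine (eLpNorm_add_le hw1m.norm hw2m.norm hP1).trans ?_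
          rw [eLpNorm_norm, eLpNorm_norm]
      _ ≤ ENNReal.ofReal s * (ENNReal.ofReal (F ^ (s-1)) * ENNReal.ofReal dr
            + ENNReal.ofReal (G ^ (s-1)) * ENNReal.ofReal dr) := by
          gcongr
          · rw [← ENNReal.ofReal_rpow_of_pos hFpos, hAf, hD]
            exact holder_step μ hq0 hs1 hsq hf.1 hdsub.1
          · rw [← ENNReal.ofReal_rpow_of_pos hGpos, hBg, hD]
            exact holder_step μ hq0 hs1 hsq hg.1 hdsub.1
  -- combine in ℝ≥0∞
  set A : ℝ := (F ^ s)⁻¹ * (s * (F ^ (s-1) * dr + G ^ (s-1) * dr)) with hA_def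
  set B : ℝ := ((G ^ s)⁻¹ - (F ^ s)⁻¹) * G ^ s with hB_def
  clear_value A B
  have hA0 : 0 ≤ A := by
    rw [hA_def]
    have := Real.rpow_nonneg hFpos.le (s-1)
    have := Real.rpow_nonneg hGpos.le (s-1)
    positivity
  have hB0 : 0 ≤ B := by
    rw [hB_def]; exact mul_nonneg (sub_nonneg.2 (inv_anti₀ hGs hGsFs)) hGs.le
  have hfinal : eLpNorm (fun x => |f x| ^ s / F ^ s - |g x| ^ s / G ^ s) P μ
      ≤ ENNReal.ofReal (A + B) := by
    rw [ENNReal.ofReal_add hA0 hB0]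
    refine htri.trans ?_
    gcongr
    · rw [hE1, hA_def, ENNReal.ofReal_mul (inv_nonneg.2 hFs.le)]
      gcongr
      refine huv.trans ?_
      rw [ENNReal.ofReal_mul hs0.le, ENNReal.ofReal_add (by positivity) (by positivity),
        ENNReal.ofReal_mul (Real.rpow_nonneg hFpos.le _),
        ENNReal.ofReal_mul (Real.rpow_nonneg hGpos.le _)]
    · rw [hE2, hvnorm, hB_def,
        ENNReal.ofReal_mul (sub_nonneg.2 (inv_anti₀ hGs hGsFs))]
  have hLh : Lnorm μ (q / s) (fun x => |f x| ^ s / F ^ s - |g x| ^ s / G ^ s) ≤ A + B := by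
    rw [Lnorm_eq_toReal hp0 hmemh, ← hP_def]
    exact ENNReal.toReal_le_of_le_ofReal (by linarith) hfinal
  -- reverse triangle : F - G ≤ dr
  have hFGdr : F - G ≤ dr := by
    have hQ1 : (1:ℝ≥0∞) ≤ Q := by rw [hQ_def]; exact ENNReal.one_le_ofReal.2 (by linarith)
    have hfe : f = (f - g) + g := by funext x; simp
    have h7 : eLpNorm f Q μ ≤ eLpNorm (f - g) Q μ + eLpNorm g Q μ := by
      nth_rewrite 1 [hfe]; exact eLpNorm_add_le hdsub.1 hg.1 hQ1
    rw [← hAf, ← hBg, ← hD, ← ENNReal.ofReal_add hdr0 (by positivity)] at h7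
    have := (ENNReal.ofReal_le_ofReal_iff (by positivity)).1 h7
    linarith
  -- final real arithmetic
  clear hmem hu hv hh_eq hmemh hm1 hm2 htri hE1 hE2 hvnorm hw1m hw2m huv hfinal
  clear hAf hBg hD hdsub hd_eq hf hg hfn hgn
  have hFs1 : (0:ℝ) < F ^ (s-1) := Real.rpow_pos_of_pos hFpos _
  have hGs1 : (0:ℝ) < G ^ (s-1) := Real.rpow_pos_of_pos hGpos _
  have hGsFs1 : G ^ (s-1) ≤ F ^ (s-1) := Real.rpow_le_rpow hGpos.le hFG (by linarith)
  have hkeyF : F ^ s = F ^ (s-1) * F := by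
    rw [← Real.rpow_add_one hFpos.ne' (s-1), sub_add_cancel]
  have hmvt : F ^ s - G ^ s ≤ s * F ^ (s-1) * (F - G) := rpow_sub_rpow_le hGpos.le hFG hs1.le
  have hFA : F * A ≤ 2 * s * dr := arithA hs0 hFpos hFs hdr0 hGsFs1 hkeyF hA_def
  have hFB : F * B ≤ s * dr := arithB hs0 hFpos hFs hGs hFs1 hFGdr hkeyF hmvt hB_def
  calc F * Lnorm μ (q / s) (fun x => |f x| ^ s / F ^ s - |g x| ^ s / G ^ s)
      ≤ F * (A + B) := mul_le_mul_of_nonneg_left hLh hFpos.le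
    _ = F * A + F * B := by ring
    _ ≤ 2 * s * dr + s * dr := add_le_add hFA hFB
    _ = 3 * s * dr := by ring

lemma Lnorm_neg {X : Type*} [MeasurableSpace X] (μ : Measure X) (p : ℝ) (w : X → ℝ) :
    Lnorm μ p (fun x => -(w x)) = Lnorm μ p w := by
  simp [Lnorm]

lemma Lnorm_nonneg {X : Type*} [MeasurableSpace X] (μ : Measure X) (p : ℝ) (w : X → ℝ) :
    0 ≤ Lnorm μ p w :=
  Real.rpow_nonneg (integral_nonneg fun x => by positivity) _

/-- Eq. (bqest): for `q ≥ 4` and nonzero `f, g ∈ L^q`,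
`max{‖f‖_q, ‖g‖_q} ‖ |f|^{q-2}/‖f‖_q^{q-2} − |g|^{q-2}/‖g‖_q^{q-2} ‖_{q/(q-2)}
  ≤ 4(q-2) ‖f − g‖_q`. -/
theorem stmt8 {X : Type*} [MeasurableSpace X] (μ : Measure X) (q : ℝ)
    (hq : 4 ≤ q) (f g : X → ℝ)
    (hf : MemLp f (ENNReal.ofReal q) μ) (hg : MemLp g (ENNReal.ofReal q) μ)
    (hfn : 0 < Lnorm μ q f) (hgn : 0 < Lnorm μ q g) :
    max (Lnorm μ q f) (Lnorm μ q g) *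
      Lnorm μ (q / (q - 2))
        (fun x => |f x| ^ (q - 2) / (Lnorm μ q f) ^ (q - 2)
                 - |g x| ^ (q - 2) / (Lnorm μ q g) ^ (q - 2)) ≤
      4 * (q - 2) * Lnorm μ q (fun x => f x - g x) := by
  have hq2 : (0:ℝ) ≤ q - 2 := by linarith
  have hdr0 : 0 ≤ Lnorm μ q (fun x => f x - g x) := Lnorm_nonneg μ q _
  rcases le_total (Lnorm μ q g) (Lnorm μ q f) with h | h
  · rw [max_eq_left h]
    refine (key μ q hq f g hf hg hfn hgn h).trans ?_
    nlinarith [mul_nonneg hq2 hdr0]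
  · rw [max_eq_right h]
    have hkey := key μ q hq g f hg hf hgn hfn h
    have e1 : (fun x => |g x| ^ (q - 2) / (Lnorm μ q g) ^ (q - 2)
          - |f x| ^ (q - 2) / (Lnorm μ q f) ^ (q - 2))
        = fun x => -((|f x| ^ (q - 2) / (Lnorm μ q f) ^ (q - 2)
          - |g x| ^ (q - 2) / (Lnorm μ q g) ^ (q - 2))) := by
      funext x; ring
    have e2 : (fun x => g x - f x) = fun x => -(f x - g x) := by funext x; ring
    rw [e1, e2, Lnorm_neg, Lnorm_neg] at hkey
    refine hkey.trans ?_
    nlinarith [mul_nonneg hq2 hdr0]
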